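/- For every natural number d > 2 and every real ε with 0 < ε < 1, one has (1/d)·(2·√(d − ε·(d−1)) + √ε·(d−2)) < √(2 − ε). (Consequently, coarse-graining Eve's optimal attack on the d-dimensional noisy projective measurement yields a strictly suboptimal guessing probability (1/2) + (√ε/(2d))·(2√(d−ε(d−1)) + √ε·(d−2)) < (1/2)·(1 + √(ε(2−ε))).) -/

import Mathlib

/-- Coarse-graining Eve's optimal attack is strictly suboptimal: for every natural `d > 2`
and every `0 < ε < 1`,
`(1/d)·(2√(d − ε(d−1)) + √ε·(d−2)) < √(2 − ε)`. -/
theorem coarse_grained_attack_suboptimal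
    (d : ℕ) (hd : 2 < d) (ε : ℝ) (hε0 : 0 < ε) (hε1 : ε < 1) :
    (1 / (d : ℝ)) *
        (2 * Real.sqrt ((d : ℝ) - ε * ((d : ℝ) - 1)) + Real.sqrt ε * ((d : ℝ) - 2))
      < Real.sqrt (2 - ε) := by
  set x : ℝ := (d : ℝ) with hxdef
  have hx3 : (3 : ℝ) ≤ x := by have : (3:ℕ) ≤ d := hd; rw [hxdef]; exact_mod_cast this
  have hx0 : (0 : ℝ) < x := by linarith
  set A : ℝ := Real.sqrt (x - ε * (x - 1)) with hAdef
  set B : ℝ := Real.sqrt ε with hBdef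
  have hargpos : (0 : ℝ) < x - ε * (x - 1) := by nlinarith
  have hA2 : A ^ 2 = x - ε * (x - 1) := Real.sq_sqrt hargpos.le
  have hB2 : B ^ 2 = ε := Real.sq_sqrt hε0.le
  have hA0 : 0 ≤ A := Real.sqrt_nonneg _
  have hB0 : 0 ≤ B := Real.sqrt_nonneg _
  have hAB : A ≠ B := by
    intro h
    have : x - ε * (x - 1) = ε := by rw [← hA2, ← hB2, h]
    nlinarith
  have hkey : 2 * A * B < A ^ 2 + B ^ 2 := by nlinarith [pow_pos (abs_pos.mpr (sub_ne_zero.mpr hAB)) 2, sq_abs (A - B)]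
  have h2e : (0 : ℝ) < 2 - ε := by linarith
  have hR2 : Real.sqrt (2 - ε) ^ 2 = 2 - ε := Real.sq_sqrt h2e.le
  have hR0 : 0 ≤ Real.sqrt (2 - ε) := Real.sqrt_nonneg _
  have hsq : (2 * A + B * (x - 2)) ^ 2 < (x * Real.sqrt (2 - ε)) ^ 2 := by
    have : (x * Real.sqrt (2 - ε)) ^ 2 = x ^ 2 * (2 - ε) := by rw [mul_pow, hR2]
    rw [this]
    nlinarith [hkey, hA2, hB2]
  have hlt : 2 * A + B * (x - 2) < x * Real.sqrt (2 - ε) :=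
    lt_of_pow_lt_pow_left₀ 2 (by positivity) hsq
  rw [one_div, inv_mul_lt_iff₀ hx0]
  linarith
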